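/- Let G be a group, B a unital algebra, and (S, ω) a factor system for (G, B), i.e., S : G → Aut(B) and ω : G × G → B^× are normalized maps satisfying S(g)S(g') = C_B(ω(g,g')) ∘ S(gg') and the cocycle condition S(g)(ω(g',g'')) ω(g, g'g'') = ω(g,g') ω(gg', g''). Then the vector space A = ⊕_{g∈G} B v_g with multiplication (b v_g)(b' v_{g'}) := b·S(g)(b')·ω(g,g') v_{gg'} is an associative unital G-graded algebra with unit v_1 and degree-1 component B, and every homogeneous element b v_g with b ∈ B^× is invertible, with inverse S(g)^{-1}(b^{-1} ω(g, g^{-1})^{-1}) v_{g^{-1}}. -/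

import Mathlib

/-- The crossed-product multiplication on `A = ⊕_{g ∈ G} B v_g` (modelled as
finitely supported functions `G →₀ B`) associated to maps `S : G → Aut(B)` and
`ω : G × G → Bˣ`: on homogeneous elements,
`(b v_g)(b' v_{g'}) = b · S(g)(b') · ω(g,g') v_{gg'}`. -/
noncomputable def cpMul {G : Type*} [Group G] {B : Type*} [Ring B]
    (S : G → (B ≃+* B)) (ω : G → G → Bˣ) :
    (G →₀ B) → (G →₀ B) → (G →₀ B) := fun f₁ f₂ =>
  f₁.sum fun g b => f₂.sum fun g' b' =>
    Finsupp.single (g * g') (b * S g b' * (ω g g' : B))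


section helpers
variable {G : Type*} [Group G] {B : Type*} [Ring B]
  (S : G → (B ≃+* B)) (ω : G → G → Bˣ)

lemma cpMul_single_single (g g' : G) (b b' : B) :
    cpMul S ω (Finsupp.single g b) (Finsupp.single g' b') =
      Finsupp.single (g * g') (b * S g b' * (ω g g' : B)) := by
  unfold cpMul
  rw [Finsupp.sum_single_index (by simp), Finsupp.sum_single_index (by simp)]

lemma cpMul_zero_left (f : G →₀ B) : cpMul S ω 0 f = 0 := by
  simp [cpMul]

lemma cpMul_zero_right (f : G →₀ B) : cpMul S ω f 0 = 0 := by
  simp [cpMul]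

lemma cpMul_add_left (f₁ f₂ h : G →₀ B) :
    cpMul S ω (f₁ + f₂) h = cpMul S ω f₁ h + cpMul S ω f₂ h := by
  classical
  unfold cpMul
  rw [Finsupp.sum_add_index]
  · intro g _; simp
  · intro g _ b₁ b₂
    rw [← Finsupp.sum_add]
    congr 1; ext g' b'
    rw [add_mul, add_mul, Finsupp.single_add]

lemma cpMul_add_right (f h₁ h₂ : G →₀ B) :
    cpMul S ω f (h₁ + h₂) = cpMul S ω f h₁ + cpMul S ω f h₂ := by
  classical
  unfold cpMul
  rw [← Finsupp.sum_add]
  congr 1; ext g b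
  rw [Finsupp.sum_add_index]
  · intro g' _; simp
  · intro g' _ b₁ b₂
    rw [map_add, mul_add, add_mul, Finsupp.single_add]

end helpers

/-- Let `(S, ω)` be a factor system for `(G, B)`:  `S` and `ω` are
normalized, `S(g)S(g') = C_B(ω(g,g')) ∘ S(gg')` and
`S(g)(ω(g',g'')) ω(g,g'g'') = ω(g,g') ω(gg',g'')`.  Then `A = ⊕_g B v_g` with the
crossed-product multiplication is an associative unital `G`-graded algebra with unit
`v_1` and degree-one component `B`, and each homogeneous element `b v_g` with
`b ∈ Bˣ` is invertible, with inverse `S(g)⁻¹(b⁻¹ ω(g,g⁻¹)⁻¹) v_{g⁻¹}`. -/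
theorem stmt15 (G : Type*) [Group G] (B : Type*) [Ring B]
    (S : G → (B ≃+* B)) (ω : G → G → Bˣ)
    (hS1 : S 1 = RingEquiv.refl B)
    (hω1 : ∀ g, ω g 1 = 1) (hω1' : ∀ g, ω 1 g = 1)
    (hδ : ∀ g g' b, S g (S g' b) = (ω g g' : B) * S (g * g') b * ((ω g g')⁻¹ : Bˣ))
    (hcoc : ∀ g g' g'',
      (S g (ω g' g'') : B) * (ω g (g' * g'') : B) = (ω g g' : B) * (ω (g * g') g'' : B)) :
    -- associativity
    (∀ x y z : G →₀ B, cpMul S ω (cpMul S ω x y) z = cpMul S ω x (cpMul S ω y z)) ∧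
    -- `v_1` is a two-sided unit
    (∀ x : G →₀ B, cpMul S ω (Finsupp.single 1 1) x = x ∧
      cpMul S ω x (Finsupp.single 1 1) = x) ∧
    -- the multiplication is `G`-graded, with the prescribed formula on homogeneous
    -- elements (in particular the degree-one component is `B`)
    (∀ (g g' : G) (b b' : B),
      cpMul S ω (Finsupp.single g b) (Finsupp.single g' b') =
        Finsupp.single (g * g') (b * S g b' * (ω g g' : B))) ∧
    -- every homogeneous element `b v_g` with `b` a unit is invertible, with the
    -- stated inverse
    (∀ (g : G) (b : Bˣ),
      cpMul S ω (Finsupp.single g (b : B))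
          (Finsupp.single g⁻¹ ((S g).symm (((b⁻¹ : Bˣ) : B) * ((ω g g⁻¹)⁻¹ : Bˣ)))) =
        Finsupp.single 1 1 ∧
      cpMul S ω (Finsupp.single g⁻¹ ((S g).symm (((b⁻¹ : Bˣ) : B) * ((ω g g⁻¹)⁻¹ : Bˣ))))
          (Finsupp.single g (b : B)) = Finsupp.single 1 1) := by
  refine ⟨?_, ?_, ?_, ?_⟩
  · -- associativity
    have hsingle : ∀ (g g' g'' : G) (b b' b'' : B),
        cpMul S ω (cpMul S ω (Finsupp.single g b) (Finsupp.single g' b'))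
            (Finsupp.single g'' b'') =
          cpMul S ω (Finsupp.single g b)
            (cpMul S ω (Finsupp.single g' b') (Finsupp.single g'' b'')) := by
      intro g g' g'' b b' b''
      rw [cpMul_single_single, cpMul_single_single, cpMul_single_single,
        cpMul_single_single]
      congr 1
      · rw [mul_assoc]
      · have key : ((ω g g')⁻¹ : Bˣ) * ((S g (ω g' g'') : B) * (ω g (g' * g'') : B))
            = (ω (g * g') g'' : B) := by
          rw [hcoc, ← mul_assoc, Units.inv_mul, one_mul]
        rw [map_mul, map_mul, hδ g g' b'']
        simp only [mul_assoc]
        rw [key]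
    have h1 : ∀ (g g' : G) (b b' : B) (z : G →₀ B),
        cpMul S ω (cpMul S ω (Finsupp.single g b) (Finsupp.single g' b')) z =
          cpMul S ω (Finsupp.single g b) (cpMul S ω (Finsupp.single g' b') z) := by
      intro g g' b b' z
      induction z using Finsupp.induction₂ with
      | zero => simp [cpMul_zero_right]
      | add_single g'' b'' f'' _ _ ih =>
        rw [cpMul_add_right, cpMul_add_right, cpMul_add_right, ih, hsingle]
    have h2 : ∀ (g : G) (b : B) (y z : G →₀ B),
        cpMul S ω (cpMul S ω (Finsupp.single g b) y) z =
          cpMul S ω (Finsupp.single g b) (cpMul S ω y z) := by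
      intro g b y z
      induction y using Finsupp.induction₂ with
      | zero => simp [cpMul_zero_left, cpMul_zero_right]
      | add_single g' b' f' _ _ ih =>
        rw [cpMul_add_right, cpMul_add_left, cpMul_add_left, cpMul_add_right, ih, h1]
    intro x y z
    induction x using Finsupp.induction₂ with
    | zero => simp [cpMul_zero_left]
    | add_single g b f _ _ ih =>
      rw [cpMul_add_left, cpMul_add_left, cpMul_add_left, ih, h2]
  · -- unit
    intro x
    constructor
    · induction x using Finsupp.induction₂ with
      | zero => simp [cpMul_zero_right]
      | add_single g b f _ _ ih =>
        rw [cpMul_add_right, ih, cpMul_single_single, hS1, hω1']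
        simp
    · induction x using Finsupp.induction₂ with
      | zero => simp [cpMul_zero_left]
      | add_single g b f _ _ ih =>
        rw [cpMul_add_left, ih, cpMul_single_single, hω1]
        simp
  · exact cpMul_single_single S ω
  · intro g b
    constructor
    · rw [cpMul_single_single, mul_inv_cancel g]
      congr 1
      rw [RingEquiv.apply_symm_apply]
      simp [mul_assoc, Units.mul_inv_cancel_left, Units.inv_mul]
    · rw [cpMul_single_single, inv_mul_cancel g]
      congr 1
      have hSg1 : S g (ω g⁻¹ g : B) = (ω g g⁻¹ : B) := by
        have := hcoc g g⁻¹ g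
        simpa [hω1, hω1'] using this
      apply (S g).injective
      rw [map_one, map_mul, map_mul, RingEquiv.apply_symm_apply, hδ g g⁻¹ (b : B),
        hSg1, mul_inv_cancel g, hS1, RingEquiv.refl_apply]
      simp only [mul_assoc, Units.inv_mul, Units.inv_mul_cancel_left, mul_one]
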